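/- Let μ be a probability measure on ℝ with all moments finite and Jacobi parameters (β_n, γ_n). Then for every m ≥ 0, the m-th moment of μ equals the sum over all noncrossing partitions σ of {1,...,m} with all blocks of size at most 2, of the product over singleton blocks V of β_{d(V,σ)} times the product over pair blocks V of γ_{d(V,σ)}, where d(V,σ) denotes the depth of block V in σ (the number of blocks strictly nesting V). -/

import Mathlib

open scoped Classical
open MeasureTheory Finset

noncomputable section

/-- `V` is nested inside `U`: some interval with endpoints in `U` contains all of `V`. -/
def Nests {m : ℕ} (U V : Finset (Fin m)) : Prop :=
  ∃ r ∈ U, ∃ s ∈ U, ∀ k ∈ V, r ≤ k ∧ k ≤ s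

/-- A finpartition of `{1,...,m}` is noncrossing. -/
def IsNoncrossing {m : ℕ} (π : Finpartition (Finset.univ : Finset (Fin m))) : Prop :=
  ∀ V₁ ∈ π.parts, ∀ V₂ ∈ π.parts, ∀ x₁ x₂ x₃ x₄ : Fin m,
    x₁ < x₂ → x₂ < x₃ → x₃ < x₄ →
    x₁ ∈ V₁ → x₃ ∈ V₁ → x₂ ∈ V₂ → x₄ ∈ V₂ → V₁ = V₂

/-- The depth of a block: the number of other blocks nesting it. -/
def depth {m : ℕ} (π : Finpartition (Finset.univ : Finset (Fin m)))
    (V : Finset (Fin m)) : ℕ :=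
  (π.parts.filter (fun U => U ≠ V ∧ Nests U V)).card

/-- Noncrossing partitions of `{1,...,m}`. -/
def NCset (m : ℕ) : Finset (Finpartition (Finset.univ : Finset (Fin m))) :=
  Finset.univ.filter IsNoncrossing

/-- Noncrossing partitions with all blocks of size at most 2. -/
def NC12 (m : ℕ) : Finset (Finpartition (Finset.univ : Finset (Fin m))) :=
  Finset.univ.filter (fun π => IsNoncrossing π ∧ ∀ V ∈ π.parts, V.card ≤ 2)

/-- Interval partitions of `{1,...,m}`. -/
def IntPart (m : ℕ) : Finset (Finpartition (Finset.univ : Finset (Fin m))) :=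
  Finset.univ.filter
    (fun π => ∀ V ∈ π.parts, ∀ x ∈ V, ∀ y ∈ V, ∀ z : Fin m, x ≤ z → z ≤ y → z ∈ V)

/-- The `m`-th moment of a measure on `ℝ`. -/
def mom (μ : Measure ℝ) (m : ℕ) : ℝ := ∫ x, x ^ m ∂μ

/-- `μ` has all moments finite. -/
def FiniteMoments (μ : Measure ℝ) : Prop :=
  ∀ m : ℕ, Integrable (fun x => x ^ m) μ

/-- `(β, γ)` are Jacobi parameters for `μ`: there are monic orthogonal polynomials
satisfying the three-term recurrence. -/
def HasJacobi (μ : Measure ℝ) (β γ : ℕ → ℝ) : Prop :=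
  ∃ P : ℕ → Polynomial ℝ,
    (∀ n, (P n).Monic) ∧ (∀ n, (P n).natDegree = n) ∧
    (∀ i j, i ≠ j → ∫ x, (P i).eval x * (P j).eval x ∂μ = 0) ∧
    (Polynomial.X * P 0 = P 1 + Polynomial.C (β 0) * P 0) ∧
    (∀ n, Polynomial.X * P (n + 1) =
      P (n + 2) + Polynomial.C (β (n + 1)) * P (n + 1) + Polynomial.C (γ n) * P n)

/-- `r` is the sequence of free cumulants of `μ` (moment-cumulant formula over
noncrossing partitions). -/
def FreeCumulants (μ : Measure ℝ) (r : ℕ → ℝ) : Prop :=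
  ∀ m : ℕ, 1 ≤ m → mom μ m = ∑ π ∈ NCset m, ∏ V ∈ π.parts, r V.card

/-- `η` is the sequence of Boolean cumulants of `μ`. -/
def BooleanCumulants (μ : Measure ℝ) (η : ℕ → ℝ) : Prop :=
  ∀ m : ℕ, 1 ≤ m → mom μ m = ∑ π ∈ IntPart m, ∏ V ∈ π.parts, η V.card

/-- `R` is the sequence of two-state free cumulants of the pair `(μ̃, μ)`,
where `r` are the free cumulants of `μ`. -/
def TwoStateCumulants (μt μ : Measure ℝ) (R r : ℕ → ℝ) : Prop :=
  FreeCumulants μ r ∧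
  ∀ m : ℕ, 1 ≤ m → mom μt m =
    ∑ π ∈ NCset m,
      (∏ V ∈ π.parts.filter (fun V => depth π V = 0), R V.card) *
      (∏ V ∈ π.parts.filter (fun V => depth π V ≠ 0), r V.card)

namespace AB

/-! ### Motzkin-path machinery -/

inductive Stp | U | F | D
deriving DecidableEq

instance : Fintype Stp :=
  ⟨{.U, .F, .D}, fun x => by cases x <;> simp⟩

def stepH : Stp → ℕ → ℕ
  | .U, h => h + 1
  | .F, h => h
  | .D, h => h - 1

def hgt (g : ℕ → Stp) (k : ℕ) : ℕ → ℕ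
  | 0 => k
  | i + 1 => stepH (g i) (hgt g k i)

@[simp] lemma hgt_zero (g : ℕ → Stp) (k : ℕ) : hgt g k 0 = k := rfl
lemma hgt_succ (g : ℕ → Stp) (k i : ℕ) : hgt g k (i + 1) = stepH (g i) (hgt g k i) := rfl

lemma hgt_shift (g : ℕ → Stp) (k : ℕ) :
    ∀ i, hgt g k (i + 1) = hgt (fun j => g (j + 1)) (stepH (g 0) k) i
  | 0 => rfl
  | i + 1 => by rw [hgt_succ, hgt_shift g k i]; rfl

def stepW (β γ : ℕ → ℝ) : Stp → ℕ → ℝ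
  | .U, h => γ h
  | .F, h => β h
  | .D, _ => 1

def wgt (β γ : ℕ → ℝ) (g : ℕ → Stp) (k m : ℕ) : ℝ :=
  ∏ i ∈ Finset.range m, stepW β γ (g i) (hgt g k i)

def valid (g : ℕ → Stp) (k m : ℕ) : Prop :=
  (∀ i < m, g i = Stp.D → 1 ≤ hgt g k i) ∧ hgt g k m = 0

def ext {m : ℕ} (f : Fin m → Stp) : ℕ → Stp :=
  fun i => if h : i < m then f ⟨i, h⟩ else Stp.F

def PSum (β γ : ℕ → ℝ) (m k : ℕ) : ℝ :=
  ∑ f : Fin m → Stp, if valid (ext f) k m then wgt β γ (ext f) k m else 0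

def c (β γ : ℕ → ℝ) : ℕ → ℕ → ℝ
  | 0, k => if k = 0 then 1 else 0
  | m + 1, k => (if k = 0 then 0 else c β γ m (k - 1)) + β k * c β γ m k + γ k * c β γ m (k + 1)

lemma c_eq_zero (β γ : ℕ → ℝ) : ∀ m k, m < k → c β γ m k = 0 := by
  intro m
  induction m with
  | zero => intro k hk; rw [c, if_neg (by omega)]
  | succ m ih =>
      intro k hk
      have hk0 : k ≠ 0 := by omega
      rw [c, if_neg hk0, ih (k - 1) (by omega), ih k (by omega), ih (k + 1) (by omega)]
      ring

/-! ### ext/cons lemmas -/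

lemma ext_cons_zero {m : ℕ} (s : Stp) (f : Fin m → Stp) : ext (Fin.cons s f) 0 = s := by
  simp [ext, Fin.cons]

lemma ext_cons_succ {m : ℕ} (s : Stp) (f : Fin m → Stp) :
    (fun j => ext (Fin.cons s f) (j + 1)) = ext f := by
  funext i
  by_cases h : i < m
  · have h' : i + 1 < m + 1 := by omega
    simp only [ext, dif_pos h, dif_pos h']
    exact @Fin.cons_succ _ (fun _ => Stp) s f ⟨i, h⟩
  · have h' : ¬ (i + 1 < m + 1) := by omega
    simp [ext, h, h']

lemma hgt_ext_cons {m : ℕ} (s : Stp) (f : Fin m → Stp) (k i : ℕ) :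
    hgt (ext (Fin.cons s f)) k (i + 1) = hgt (ext f) (stepH s k) i := by
  rw [hgt_shift, ext_cons_succ, ext_cons_zero]

lemma valid_ext_cons {m : ℕ} (s : Stp) (f : Fin m → Stp) (k : ℕ) :
    valid (ext (Fin.cons s f)) k (m + 1) ↔
      (s = Stp.D → 1 ≤ k) ∧ valid (ext f) (stepH s k) m := by
  constructor
  · rintro ⟨h1, h2⟩
    refine ⟨fun hs => by simpa [ext_cons_zero, hs] using h1 0 (by omega) (by rw [ext_cons_zero, hs]), ?_, ?_⟩
    · intro i hi hD
      rw [← congrFun (ext_cons_succ s f) i] at hD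
      have := h1 (i + 1) (by omega) hD
      rwa [hgt_ext_cons] at this
    · rw [← hgt_ext_cons s f k m]; exact h2
  · rintro ⟨h0, h1, h2⟩
    constructor
    · intro i hi hD
      match i with
      | 0 => rw [ext_cons_zero] at hD; simpa using h0 hD
      | j + 1 =>
          rw [hgt_ext_cons]
          rw [congrFun (ext_cons_succ s f) j] at hD
          exact h1 j (by omega) hD
    · rw [hgt_ext_cons]; exact h2

lemma wgt_ext_cons (β γ : ℕ → ℝ) {m : ℕ} (s : Stp) (f : Fin m → Stp) (k : ℕ) :
    wgt β γ (ext (Fin.cons s f)) k (m + 1) =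
      stepW β γ s k * wgt β γ (ext f) (stepH s k) m := by
  rw [wgt, Finset.prod_range_succ', wgt]
  rw [ext_cons_zero, hgt_zero, mul_comm]
  congr 1
  apply Finset.prod_congr rfl
  intro i _
  rw [hgt_ext_cons, congrFun (ext_cons_succ s f) i]

lemma univ_Stp : (Finset.univ : Finset Stp) = {Stp.U, Stp.F, Stp.D} := by decide

lemma sum_Stp {M : Type*} [AddCommMonoid M] (G : Stp → M) :
    ∑ s : Stp, G s = G .U + G .F + G .D := by
  rw [univ_Stp]
  rw [Finset.sum_insert (by decide), Finset.sum_insert (by decide), Finset.sum_singleton, add_assoc]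

lemma c_eq_PSum (β γ : ℕ → ℝ) : ∀ m k, c β γ m k = PSum β γ m k := by
  intro m
  induction m with
  | zero =>
      intro k
      rw [PSum, Fintype.sum_unique]
      by_cases hk : k = 0 <;> simp [c, valid, wgt, hk]
  | succ m ih =>
      intro k
      have e1 : PSum β γ (m + 1) k = ∑ s : Stp, ∑ f : Fin m → Stp,
          (if valid (ext (Fin.cons s f)) k (m + 1) then wgt β γ (ext (Fin.cons s f)) k (m + 1) else 0) := by
        rw [PSum, ← (Fin.consEquiv (fun _ : Fin (m + 1) => Stp)).sum_comp, Fintype.sum_prod_type]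
        rfl
      rw [e1]
      have key : ∀ s : Stp, ∀ f : Fin m → Stp,
          (if valid (ext (Fin.cons s f)) k (m + 1) then wgt β γ (ext (Fin.cons s f)) k (m + 1) else 0)
          = (if (s = Stp.D → 1 ≤ k) then (1:ℝ) else 0) * stepW β γ s k *
            (if valid (ext f) (stepH s k) m then wgt β γ (ext f) (stepH s k) m else 0) := by
        intro s f
        rw [valid_ext_cons]
        by_cases h0 : (s = Stp.D → 1 ≤ k)
        · by_cases h1 : valid (ext f) (stepH s k) m
          · rw [if_pos ⟨h0, h1⟩, if_pos h0, if_pos h1, wgt_ext_cons, one_mul]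
          · rw [if_neg (fun h => h1 h.2), if_pos h0, if_neg h1, mul_zero]
        · rw [if_neg (fun h => h0 h.1), if_neg h0, zero_mul, zero_mul]
      simp only [key]
      rw [sum_Stp (fun s => ∑ f : Fin m → Stp, (if (s = Stp.D → 1 ≤ k) then (1:ℝ) else 0) * stepW β γ s k *
            (if valid (ext f) (stepH s k) m then wgt β γ (ext f) (stepH s k) m else 0))]
      have hU : ∀ s : Stp, s ≠ Stp.D →
          ∑ f : Fin m → Stp, (if (s = Stp.D → 1 ≤ k) then (1:ℝ) else 0) * stepW β γ s k *
            (if valid (ext f) (stepH s k) m then wgt β γ (ext f) (stepH s k) m else 0)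
          = stepW β γ s k * PSum β γ m (stepH s k) := by
        intro s hs
        rw [PSum, Finset.mul_sum]
        apply Finset.sum_congr rfl
        intro f _
        rw [if_pos (fun h => absurd h hs), one_mul]
      rw [hU Stp.U (by decide), hU Stp.F (by decide)]
      by_cases hk : k = 0
      · subst hk
        have hD : ∑ f : Fin m → Stp, (if (Stp.D = Stp.D → 1 ≤ 0) then (1:ℝ) else 0) * stepW β γ Stp.D 0 *
            (if valid (ext f) (stepH Stp.D 0) m then wgt β γ (ext f) (stepH Stp.D 0) m else 0) = 0 := by
          apply Finset.sum_eq_zero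
          intro f _
          rw [if_neg (by simp), zero_mul, zero_mul]
        rw [hD, c, if_pos rfl, ← ih, ← ih]
        show (0:ℝ) + β 0 * c β γ m 0 + γ 0 * c β γ m 1 = γ 0 * c β γ m (0+1) + β 0 * c β γ m 0 + 0
        ring
      · have hD : ∑ f : Fin m → Stp, (if (Stp.D = Stp.D → 1 ≤ k) then (1:ℝ) else 0) * stepW β γ Stp.D k *
            (if valid (ext f) (stepH Stp.D k) m then wgt β γ (ext f) (stepH Stp.D k) m else 0)
            = PSum β γ m (k - 1) := by
          rw [PSum]
          apply Finset.sum_congr rfl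
          intro f _
          rw [if_pos (fun _ => by omega), one_mul]
          show (1:ℝ) * _ = _
          rw [one_mul]
          rfl
        rw [hD, c, if_neg hk, ← ih, ← ih, ← ih]
        show _ = γ k * c β γ m (k+1) + β k * c β γ m k + c β γ m (k-1)
        ring

/-! ### Analytic part -/

lemma poly_integrable {μ : Measure ℝ} (hfin : FiniteMoments μ) (p : Polynomial ℝ) :
    Integrable (fun x => p.eval x) μ := by
  have : (fun x : ℝ => p.eval x)
      = fun x => ∑ i ∈ Finset.range (p.natDegree + 1), p.coeff i * x ^ i :=
    funext fun x => by rw [Polynomial.eval_eq_sum_range]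
  rw [this]
  exact integrable_finset_sum _ (fun i _ => (hfin i).const_mul _)

section Jacobi

variable {μ : Measure ℝ} (β γ : ℕ → ℝ) (P : ℕ → Polynomial ℝ)

lemma X_pow_eq (hP0 : P 0 = 1)
    (hrec0 : Polynomial.X * P 0 = P 1 + Polynomial.C (β 0) * P 0)
    (hrec : ∀ n, Polynomial.X * P (n + 1) =
      P (n + 2) + Polynomial.C (β (n + 1)) * P (n + 1) + Polynomial.C (γ n) * P n) :
    ∀ m, (Polynomial.X : Polynomial ℝ) ^ m
      = ∑ k ∈ Finset.range (m + 1), Polynomial.C (c β γ m k) * P k := by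
  intro m
  induction m with
  | zero => simp [c, hP0]
  | succ m ih =>
      set gg : ℕ → ℝ := fun k => if k = 0 then 0 else γ (k - 1) with hgg
      set QQ : ℕ → Polynomial ℝ := fun k => if k = 0 then 0 else P (k - 1) with hQQ
      have hXP : ∀ k, Polynomial.X * P k
          = P (k + 1) + Polynomial.C (β k) * P k + Polynomial.C (gg k) * QQ k := by
        intro k
        match k with
        | 0 => simp [hgg, hQQ, hrec0]
        | k + 1 => simpa [hgg, hQQ] using hrec k
      have step1 : (Polynomial.X : Polynomial ℝ) ^ (m + 1)
          = ∑ k ∈ Finset.range (m + 1), Polynomial.C (c β γ m k) * (Polynomial.X * P k) := by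
        rw [pow_succ, mul_comm, ih, Finset.mul_sum]
        exact Finset.sum_congr rfl fun k _ => by ring
      rw [step1]
      have expand : ∀ k, Polynomial.C (c β γ m k) * (Polynomial.X * P k)
          = Polynomial.C (c β γ m k) * P (k + 1)
            + Polynomial.C (β k * c β γ m k) * P k
            + Polynomial.C (c β γ m k * gg k) * QQ k := by
        intro k
        rw [hXP k]
        simp only [Polynomial.C_mul]
        ring
      simp only [expand]
      rw [Finset.sum_add_distrib, Finset.sum_add_distrib]
      -- target side
      have ctarget : ∀ k, Polynomial.C (c β γ (m + 1) k) * P k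
          = Polynomial.C (if k = 0 then (0:ℝ) else c β γ m (k - 1)) * P k
            + Polynomial.C (β k * c β γ m k) * P k
            + Polynomial.C (γ k * c β γ m (k + 1)) * P k := by
        intro k
        show Polynomial.C ((if k = 0 then (0:ℝ) else c β γ m (k-1)) + β k * c β γ m k + γ k * c β γ m (k+1)) * P k = _
        simp only [Polynomial.C_add]
        ring
      have hsplit : (∑ k ∈ Finset.range (m + 1 + 1), Polynomial.C (c β γ (m + 1) k) * P k)
          = (∑ k ∈ Finset.range (m + 1 + 1),
              Polynomial.C (if k = 0 then (0:ℝ) else c β γ m (k - 1)) * P k)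
            + (∑ k ∈ Finset.range (m + 1 + 1), Polynomial.C (β k * c β γ m k) * P k)
            + (∑ k ∈ Finset.range (m + 1 + 1), Polynomial.C (γ k * c β γ m (k + 1)) * P k) := by
        rw [← Finset.sum_add_distrib, ← Finset.sum_add_distrib]
        exact Finset.sum_congr rfl fun k _ => ctarget k
      rw [hsplit]
      congr 1
      congr 1
      · -- T1
        rw [Finset.sum_range_succ' (fun k => Polynomial.C (if k = 0 then (0:ℝ) else c β γ m (k - 1)) * P k) (m+1)]
        simp
      · -- T2
        rw [Finset.sum_range_succ (fun k => Polynomial.C (β k * c β γ m k) * P k) (m+1)]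
        rw [c_eq_zero β γ m (m+1) (by omega)]
        simp
      · -- T3
        rw [Finset.sum_range_succ (fun k => Polynomial.C (γ k * c β γ m (k + 1)) * P k) (m+1),
            Finset.sum_range_succ (fun k => Polynomial.C (γ k * c β γ m (k + 1)) * P k) m]
        rw [c_eq_zero β γ m (m+2) (by omega), c_eq_zero β γ m (m+1) (by omega)]
        simp only [Polynomial.C_0, mul_zero, zero_mul, add_zero]
        rw [Finset.sum_range_succ' (fun k => Polynomial.C (c β γ m k * gg k) * QQ k) m]
        have h0 : (QQ 0 : Polynomial ℝ) = 0 := by simp [hQQ]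
        rw [h0]
        simp only [mul_zero, add_zero]
        apply Finset.sum_congr rfl
        intro i _
        have h1 : gg (i + 1) = γ i := by simp [hgg]
        have h2 : QQ (i + 1) = P i := by simp [hQQ]
        rw [h1, h2, mul_comm (c β γ m (i + 1)) (γ i)]

end Jacobi

lemma mom_eq_c (μ : Measure ℝ) [IsProbabilityMeasure μ] (hfin : FiniteMoments μ)
    (β γ : ℕ → ℝ) (hJ : HasJacobi μ β γ) (m : ℕ) : mom μ m = c β γ m 0 := by
  obtain ⟨P, hmon, hdeg, horth, hrec0, hrec⟩ := hJ
  have hP0 : P 0 = 1 := (hmon 0).natDegree_eq_zero.mp (hdeg 0)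
  have hint0 : ∫ x, (P 0).eval x ∂μ = 1 := by
    simp [hP0, measure_univ]
  have hintk : ∀ k, 1 ≤ k → ∫ x, (P k).eval x ∂μ = 0 := by
    intro k hk
    have := horth 0 k (by omega)
    simpa [hP0] using this
  have hX := X_pow_eq β γ P hP0 hrec0 hrec m
  have : mom μ m = ∫ x, (∑ k ∈ Finset.range (m + 1), Polynomial.C (c β γ m k) * P k).eval x ∂μ := by
    rw [mom]
    congr 1
    funext x
    rw [← hX]
    simp
  rw [this]
  have : (fun x => (∑ k ∈ Finset.range (m + 1), Polynomial.C (c β γ m k) * P k).eval x)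
      = fun x => ∑ k ∈ Finset.range (m + 1), c β γ m k * (P k).eval x := by
    funext x; simp [Polynomial.eval_finset_sum]
  rw [this, integral_finset_sum _ (fun k _ => ((poly_integrable hfin (P k)).const_mul (c β γ m k)))]
  rw [Finset.sum_range_succ' (fun k => ∫ x, c β γ m k * (P k).eval x ∂μ) m]
  have hzero : ∀ i ∈ Finset.range m, ∫ x, c β γ m (i + 1) * (P (i + 1)).eval x ∂μ = 0 := by
    intro i _
    rw [integral_const_mul, hintk (i + 1) (by omega), mul_zero]
  rw [Finset.sum_congr rfl hzero, Finset.sum_const, smul_zero, zero_add,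
      integral_const_mul, hint0, mul_one]

variable {m : ℕ}

lemma ext_val (f : Fin m → Stp) (i : Fin m) : ext f (i : ℕ) = f i := by
  simp [ext, i.isLt]

/-! ### pairs -/

lemma pair_repr {V : Finset (Fin m)} (h : V.card = 2) : ∃ a b : Fin m, a < b ∧ V = {a, b} := by
  obtain ⟨a, b, hab, rfl⟩ := Finset.card_eq_two.mp h
  rcases lt_or_gt_of_ne hab with h' | h'
  · exact ⟨a, b, h', rfl⟩
  · exact ⟨b, a, h', by rw [Finset.pair_comm]⟩

lemma min'_pair {a b : Fin m} (hab : a < b) (h : ({a, b} : Finset (Fin m)).Nonempty) :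
    ({a, b} : Finset (Fin m)).min' h = a := by
  apply le_antisymm (Finset.min'_le _ a (by simp))
  apply Finset.le_min'
  intro y hy
  rcases Finset.mem_insert.mp hy with rfl | hy
  · exact le_rfl
  · rw [Finset.mem_singleton.mp hy]; exact hab.le

lemma mem_pair {a b x : Fin m} : x ∈ ({a, b} : Finset (Fin m)) ↔ x = a ∨ x = b := by
  simp

lemma min'_eq_of_pair {B : Finset (Fin m)} {a b : Fin m} (hab : a < b)
    (hBab : B = {a, b}) (hne : B.Nonempty) : B.min' hne = a := by
  subst hBab; exact min'_pair hab _

/-! ### the map from partitions to paths -/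

def phi (σ : Finpartition (Finset.univ : Finset (Fin m))) (i : Fin m) : Stp :=
  if (σ.part i).card = 1 then Stp.F
  else if ∀ x ∈ σ.part i, i ≤ x then Stp.U
  else Stp.D

def opn (σ : Finpartition (Finset.univ : Finset (Fin m))) (i : ℕ) :
    Finset (Finset (Fin m)) :=
  σ.parts.filter (fun V => V.card = 2 ∧ (∃ x ∈ V, (x : ℕ) < i) ∧ (∃ x ∈ V, i ≤ (x : ℕ)))

section Phi

variable {σ : Finpartition (Finset.univ : Finset (Fin m))}

lemma card_cases (hc2 : ∀ V ∈ σ.parts, V.card ≤ 2) {V : Finset (Fin m)}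
    (hV : V ∈ σ.parts) : V.card = 1 ∨ V.card = 2 := by
  have h1 : 0 < V.card := Finset.card_pos.mpr (σ.nonempty_of_mem_parts hV)
  have := hc2 V hV
  omega

lemma opn_zero : opn σ 0 = ∅ := by
  rw [Finset.eq_empty_iff_forall_notMem]
  intro V hV
  simp only [opn, Finset.mem_filter] at hV
  obtain ⟨-, -, ⟨x, -, hx⟩, -⟩ := hV
  omega

lemma opn_end : opn σ m = ∅ := by
  rw [Finset.eq_empty_iff_forall_notMem]
  intro V hV
  simp only [opn, Finset.mem_filter] at hV
  obtain ⟨-, -, -, x, -, hx⟩ := hV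
  exact absurd x.isLt (by omega)

lemma opn_step_other {i : ℕ} {V : Finset (Fin m)}
    (hiV : ∀ x ∈ V, (x : ℕ) ≠ i) :
    V ∈ opn σ (i + 1) ↔ V ∈ opn σ i := by
  simp only [opn, Finset.mem_filter]
  constructor
  · rintro ⟨h0, h1, ⟨x, hx, hx1⟩, ⟨y, hy, hy1⟩⟩
    exact ⟨h0, h1, ⟨x, hx, by have := hiV x hx; omega⟩, ⟨y, hy, by omega⟩⟩
  · rintro ⟨h0, h1, ⟨x, hx, hx1⟩, ⟨y, hy, hy1⟩⟩
    exact ⟨h0, h1, ⟨x, hx, by omega⟩, ⟨y, hy, by have := hiV y hy; omega⟩⟩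

/-- If `i` is an element of the block `B`, every other block avoids position `i`. -/
lemma other_avoids {i : Fin m} {V : Finset (Fin m)} (hV : V ∈ σ.parts)
    (hVB : V ≠ σ.part i) : ∀ x ∈ V, (x : ℕ) ≠ (i : ℕ) := by
  intro x hx hxi
  have : x = i := Fin.ext hxi
  subst this
  exact hVB (σ.eq_of_mem_parts hV ((σ.part_mem.2 (Finset.mem_univ x))) hx
    (σ.mem_part (Finset.mem_univ x)))

/-- The three cases for a step of the path of `σ`. -/
lemma opn_step (hnc : IsNoncrossing σ) (hc2 : ∀ V ∈ σ.parts, V.card ≤ 2)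
    {i : ℕ} (hi : i < m) :
    (phi σ ⟨i, hi⟩ = Stp.F ∧ opn σ (i + 1) = opn σ i) ∨
    (phi σ ⟨i, hi⟩ = Stp.U ∧ opn σ (i + 1) = insert (σ.part ⟨i, hi⟩) (opn σ i) ∧
      σ.part ⟨i, hi⟩ ∉ opn σ i) ∨
    (phi σ ⟨i, hi⟩ = Stp.D ∧ opn σ i = insert (σ.part ⟨i, hi⟩) (opn σ (i + 1)) ∧
      σ.part ⟨i, hi⟩ ∉ opn σ (i + 1)) := by
  set ii : Fin m := ⟨i, hi⟩ with hii
  have hBmem : σ.part ii ∈ σ.parts := (σ.part_mem.2 (Finset.mem_univ ii))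
  have hiB : ii ∈ σ.part ii := σ.mem_part (Finset.mem_univ ii)
  rcases card_cases hc2 hBmem with h1 | h2
  · -- singleton: flat step
    left
    constructor
    · rw [phi, if_pos h1]
    · apply Finset.ext
      intro V
      by_cases hVB : V = σ.part ii
      · subst hVB
        simp only [opn, Finset.mem_filter]
        constructor
        · rintro ⟨-, hcard, -⟩; omega
        · rintro ⟨-, hcard, -⟩; omega
      · constructor
        · intro hmem
          have hV : V ∈ σ.parts := Finset.mem_of_mem_filter V hmem
          exact (opn_step_other (other_avoids hV hVB)).mp hmem
        · intro hmem
          have hV : V ∈ σ.parts := Finset.mem_of_mem_filter V hmem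
          exact (opn_step_other (other_avoids hV hVB)).mpr hmem
  · obtain ⟨a, b, hab, hBab⟩ := pair_repr h2
    have hmin : (σ.part ii).min' (σ.nonempty_of_mem_parts hBmem) = a :=
      min'_eq_of_pair hab hBab _
    have hiiab : ii = a ∨ ii = b := by
      rw [hBab] at hiB; exact mem_pair.mp hiB
    have haB : a ∈ σ.part ii := by rw [hBab]; exact Finset.mem_insert_self a _
    have hbB : b ∈ σ.part ii := by rw [hBab]; simp
    rcases hiiab with hia | hib
    · -- opener
      right; left
      have hphi : phi σ ii = Stp.U := by
        rw [phi, if_neg (by omega), if_pos]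
        intro x hx
        rw [hBab] at hx
        rcases mem_pair.mp hx with rfl | rfl
        · rw [hia]
        · rw [hia]; exact hab.le
      refine ⟨hphi, ?_, ?_⟩
      · apply Finset.ext
        intro V
        by_cases hVB : V = σ.part ii
        · subst hVB
          simp only [Finset.mem_insert]
          constructor
          · intro _; exact Or.inl trivial
          · intro _
            simp only [opn, Finset.mem_filter]
            refine ⟨hBmem, h2, ⟨a, haB, ?_⟩, ⟨b, hbB, ?_⟩⟩
            · have : (a : ℕ) = i := by rw [← hia]
              omega
            · have h1 : (a : ℕ) = i := by rw [← hia]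
              have h2 : (a : ℕ) < (b : ℕ) := hab
              omega
        · rw [Finset.mem_insert]
          have hmm : V ∈ opn σ (i+1) ↔ V ∈ opn σ i := by
            constructor
            · intro hmem
              exact (opn_step_other (other_avoids (Finset.mem_of_mem_filter V hmem) hVB)).mp hmem
            · intro hmem
              exact (opn_step_other (other_avoids (Finset.mem_of_mem_filter V hmem) hVB)).mpr hmem
          rw [hmm]
          exact ⟨Or.inr, fun h => h.elim (fun h => absurd h hVB) id⟩
      · -- B not open at i
        intro hmem
        simp only [opn, Finset.mem_filter, hBab] at hmem
        obtain ⟨-, -, ⟨x, hx, hx1⟩, -⟩ := hmem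
        rcases mem_pair.mp hx with rfl | rfl
        · have : (x : ℕ) = i := by rw [← hia]
          omega
        · have h1 : (a : ℕ) = i := by rw [← hia]
          have h2 : (a : ℕ) < (x : ℕ) := hab
          omega
    · -- closer
      right; right
      have hphi : phi σ ii = Stp.D := by
        rw [phi, if_neg (by omega), if_neg]
        intro hall
        have := hall a haB
        rw [hib] at this
        exact absurd this (not_le.mpr hab)
      refine ⟨hphi, ?_, ?_⟩
      · apply Finset.ext
        intro V
        by_cases hVB : V = σ.part ii
        · subst hVB
          simp only [Finset.mem_insert]
          constructor
          · intro _; exact Or.inl trivial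
          · intro _
            simp only [opn, Finset.mem_filter]
            refine ⟨hBmem, h2, ⟨a, haB, ?_⟩, ⟨b, hbB, ?_⟩⟩
            · have h1 : (b : ℕ) = i := by rw [← hib]
              have h2 : (a : ℕ) < (b : ℕ) := hab
              omega
            · have : (b : ℕ) = i := by rw [← hib]
              omega
        · rw [Finset.mem_insert]
          have hmm : V ∈ opn σ (i+1) ↔ V ∈ opn σ i := by
            constructor
            · intro hmem
              exact (opn_step_other (other_avoids (Finset.mem_of_mem_filter V hmem) hVB)).mp hmem
            · intro hmem
              exact (opn_step_other (other_avoids (Finset.mem_of_mem_filter V hmem) hVB)).mpr hmem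
          rw [hmm]
          exact ⟨Or.inr, fun h => h.elim (fun h => absurd h hVB) id⟩
      · -- B not open at i+1
        intro hmem
        simp only [opn, Finset.mem_filter, hBab] at hmem
        obtain ⟨-, -, -, ⟨y, hy, hy1⟩⟩ := hmem
        rcases mem_pair.mp hy with rfl | rfl
        · have h1 : (b : ℕ) = i := by rw [← hib]
          have h2 : (y : ℕ) < (b : ℕ) := hab
          omega
        · have : (y : ℕ) = i := by rw [← hib]
          omega

lemma hgt_phi (hnc : IsNoncrossing σ) (hc2 : ∀ V ∈ σ.parts, V.card ≤ 2) :
    ∀ i, i ≤ m → hgt (ext (phi σ)) 0 i = (opn σ i).card := by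
  intro i
  induction i with
  | zero => intro _; rw [hgt_zero, opn_zero, Finset.card_empty]
  | succ i ih =>
      intro hi1
      have hi : i < m := by omega
      have hext : ext (phi σ) i = phi σ ⟨i, hi⟩ := by rw [ext, dif_pos hi]
      rw [hgt_succ, hext, ih (by omega)]
      rcases opn_step hnc hc2 hi with ⟨hp, he⟩ | ⟨hp, he, hn⟩ | ⟨hp, he, hn⟩
      · rw [hp, he]; rfl
      · rw [hp, he, Finset.card_insert_of_notMem hn]; rfl
      · rw [hp, he, Finset.card_insert_of_notMem hn]
        show (opn σ (i+1)).card = (opn σ (i+1)).card + 1 - 1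
        omega

lemma valid_phi (hnc : IsNoncrossing σ) (hc2 : ∀ V ∈ σ.parts, V.card ≤ 2) :
    valid (ext (phi σ)) 0 m := by
  constructor
  · intro i hi hD
    have hext : ext (phi σ) i = phi σ ⟨i, hi⟩ := by rw [ext, dif_pos hi]
    rw [hext] at hD
    rw [hgt_phi hnc hc2 i (by omega)]
    rcases opn_step hnc hc2 hi with ⟨hp, -⟩ | ⟨hp, -⟩ | ⟨hp, he, hn⟩
    · rw [hp] at hD; exact absurd hD (by decide)
    · rw [hp] at hD; exact absurd hD (by decide)
    · rw [he, Finset.card_insert_of_notMem hn]; omega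
  · rw [hgt_phi hnc hc2 m le_rfl, opn_end, Finset.card_empty]

/-! ### depth equals height at the opener -/

lemma depth_filter_eq (hnc : IsNoncrossing σ) (hc2 : ∀ V ∈ σ.parts, V.card ≤ 2)
    {V : Finset (Fin m)} (hV : V ∈ σ.parts) (hne : V.Nonempty) :
    σ.parts.filter (fun U => U ≠ V ∧ Nests U V) = opn σ ((V.min' hne : Fin m) : ℕ) := by
  rw [opn]
  apply Finset.filter_congr
  intro U hU
  set v : Fin m := V.min' hne with hv
  have hvV : v ∈ V := Finset.min'_mem V hne
  constructor
  · rintro ⟨hUV, r, hr, s, hs, hall⟩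
    have hUne : U.Nonempty := σ.nonempty_of_mem_parts hU
    have hU2 : U.card = 2 := by
      rcases card_cases hc2 hU with h1 | h2
      · exfalso
        obtain ⟨u, hu⟩ := Finset.card_eq_one.mp h1
        subst hu
        have hru : r = u := Finset.mem_singleton.mp hr
        have hsu : s = u := Finset.mem_singleton.mp hs
        have h := hall v hvV
        have h1 : u ≤ v := by rw [← hru]; exact h.1
        have h2 : v ≤ u := by rw [← hsu]; exact h.2
        have hvu : v = u := le_antisymm h2 h1
        exact hUV (σ.eq_of_mem_parts hU hV (hvu ▸ Finset.mem_singleton_self u) hvV)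
      · exact h2
    obtain ⟨a, b, hab, hUab⟩ := pair_repr hU2
    refine ⟨hU2, ⟨a, by rw [hUab]; simp, ?_⟩, ⟨s, hs, ?_⟩⟩
    · -- (a : ℕ) < v
      have har : a ≤ r := by
        rw [hUab] at hr
        rcases mem_pair.mp hr with rfl | rfl
        · exact le_rfl
        · exact hab.le
      have hav : a ≤ v := le_trans har (hall v hvV).1
      have hneq : a ≠ v := by
        intro h
        subst h
        exact hUV (σ.eq_of_mem_parts hU hV (by rw [hUab]; simp) hvV)
      have : a < v := lt_of_le_of_ne hav hneq
      exact this
    · exact (hall v hvV).2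
  · rintro ⟨hU2, ⟨x, hxU, hxv⟩, ⟨y, hyU, hvy⟩⟩
    obtain ⟨a, b, hab, hUab⟩ := pair_repr hU2
    have hUV : U ≠ V := by
      intro h
      subst h
      exact absurd (Finset.min'_le U x hxU) (by rw [← hv]; omega)
    refine ⟨hUV, ?_⟩
    -- show max V ≤ b
    have haxv : (a : ℕ) < (v : ℕ) := by
      have : a ≤ x := by
        rw [hUab] at hxU
        rcases mem_pair.mp hxU with rfl | rfl
        · exact le_rfl
        · exact hab.le
      have h1 : (a : ℕ) ≤ (x : ℕ) := this
      omega
    have hvyb : (v : ℕ) ≤ (b : ℕ) := by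
      have : y ≤ b := by
        rw [hUab] at hyU
        rcases mem_pair.mp hyU with rfl | rfl
        · exact hab.le
        · exact le_rfl
      have h1 : (y : ℕ) ≤ (b : ℕ) := this
      omega
    have hbV : b ∉ V := by
      intro h
      exact hUV (σ.eq_of_mem_parts hU hV (by rw [hUab]; simp) h)
    have hvb : v < b := by
      have : v ≠ b := fun h => hbV (h ▸ hvV)
      have h1 : (v : ℕ) ≠ (b : ℕ) := fun h => this (Fin.ext h)
      exact Fin.lt_def.mpr (by omega)
    have hmaxb : V.max' hne ≤ b := by
      by_contra hcon
      push_neg at hcon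
      have haU : a ∈ U := by rw [hUab]; simp
      have hbU : b ∈ U := by rw [hUab]; simp
      have := hnc U hU V hV a v b (V.max' hne) (Fin.lt_def.mpr haxv) hvb hcon
        haU hbU hvV (Finset.max'_mem V hne)
      exact hUV this
    refine ⟨a, by rw [hUab]; simp, b, by rw [hUab]; simp, ?_⟩
    intro k hk
    constructor
    · have h1 : v ≤ k := Finset.min'_le V k hk
      have h2 : (a : ℕ) < (v : ℕ) := haxv
      have h3 : (v : ℕ) ≤ (k : ℕ) := h1
      exact Fin.le_def.mpr (by omega)
    · exact le_trans (Finset.le_max' V k hk) hmaxb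

lemma depth_eq_opn (hnc : IsNoncrossing σ) (hc2 : ∀ V ∈ σ.parts, V.card ≤ 2)
    {V : Finset (Fin m)} (hV : V ∈ σ.parts) (hne : V.Nonempty) :
    depth σ V = (opn σ ((V.min' hne : Fin m) : ℕ)).card := by
  rw [depth, depth_filter_eq hnc hc2 hV hne]

lemma wgt_phi (hnc : IsNoncrossing σ) (hc2 : ∀ V ∈ σ.parts, V.card ≤ 2) (β γ : ℕ → ℝ) :
    wgt β γ (ext (phi σ)) 0 m =
      (∏ V ∈ σ.parts.filter (fun V => V.card = 1), β (depth σ V)) *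
      (∏ V ∈ σ.parts.filter (fun V => V.card = 2), γ (depth σ V)) := by
  have h1 : wgt β γ (ext (phi σ)) 0 m
      = ∏ i : Fin m, stepW β γ (phi σ i) ((opn σ (i : ℕ)).card) := by
    rw [wgt, ← Fin.prod_univ_eq_prod_range]
    apply Finset.prod_congr rfl
    intro i _
    rw [ext_val, hgt_phi hnc hc2 (i : ℕ) (le_of_lt i.isLt)]
  rw [h1]
  have h2 : (Finset.univ : Finset (Fin m)) = σ.parts.biUnion id := σ.biUnion_parts.symm
  rw [Finset.prod_congr h2 (fun x _ => rfl), Finset.prod_biUnion σ.supIndep.pairwiseDisjoint]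
  have h3 : ∀ V ∈ σ.parts, (∏ i ∈ (id V : Finset (Fin m)), stepW β γ (phi σ i) ((opn σ (i : ℕ)).card))
      = if V.card = 1 then β (depth σ V) else γ (depth σ V) := by
    intro V hV
    have hne : V.Nonempty := σ.nonempty_of_mem_parts hV
    rcases card_cases hc2 hV with hc | hc
    · obtain ⟨v, hvv⟩ := Finset.card_eq_one.mp hc
      subst hvv
      rw [id, Finset.prod_singleton, if_pos hc]
      have hpart : σ.part v = {v} := σ.part_eq_of_mem hV (Finset.mem_singleton_self v)
      have hphi : phi σ v = Stp.F := by
        rw [phi, if_pos (by rw [hpart]; exact Finset.card_singleton v)]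
      rw [hphi]
      show β ((opn σ (v : ℕ)).card) = β (depth σ {v})
      rw [depth_eq_opn hnc hc2 hV hne, Finset.min'_singleton]
    · obtain ⟨a, b, hab, hVab⟩ := pair_repr hc
      subst hVab
      rw [id, if_neg (by omega), Finset.prod_pair (ne_of_lt hab)]
      have hparta : σ.part a = {a, b} := σ.part_eq_of_mem hV (by simp)
      have hpartb : σ.part b = {a, b} := σ.part_eq_of_mem hV (by simp)
      have hphia : phi σ a = Stp.U := by
        rw [phi, if_neg (by rw [hparta]; omega), if_pos]
        intro x hx
        rw [hparta] at hx
        rcases mem_pair.mp hx with rfl | rfl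
        · exact le_rfl
        · exact hab.le
      have hphib : phi σ b = Stp.D := by
        rw [phi, if_neg (by rw [hpartb]; omega), if_neg]
        intro hall
        exact absurd (hall a (by rw [hpartb]; simp)) (not_le.mpr hab)
      rw [hphia, hphib]
      show γ ((opn σ (a : ℕ)).card) * 1 = γ (depth σ {a, b})
      rw [mul_one, depth_eq_opn hnc hc2 hV hne, min'_pair hab hne]
  rw [Finset.prod_congr rfl h3,
    ← Finset.prod_filter_mul_prod_filter_not σ.parts (fun V => V.card = 1)]
  congr 1
  · apply Finset.prod_congr rfl
    intro V hV
    rw [if_pos (Finset.mem_filter.mp hV).2]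
  · have hf : σ.parts.filter (fun V => ¬ V.card = 1) = σ.parts.filter (fun V => V.card = 2) := by
      apply Finset.filter_congr
      intro V hV
      rcases card_cases hc2 hV with h | h <;> simp [h]
    rw [hf]
    apply Finset.prod_congr rfl
    intro V hV
    rw [if_neg (by rw [(Finset.mem_filter.mp hV).2]; omega)]

end Phi

/-! ### Path analysis: matching of steps -/

section Paths

variable {g : ℕ → Stp}

lemma hgt_succ_le (g : ℕ → Stp) (i : ℕ) : hgt g 0 (i + 1) ≤ hgt g 0 i + 1 := by
  cases hgi : g i <;> (rw [hgt_succ, hgi]; simp only [stepH]; omega)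

lemma hgt_pred_le (g : ℕ → Stp) (i : ℕ) : hgt g 0 i - 1 ≤ hgt g 0 (i + 1) := by
  cases hgi : g i <;> (rw [hgt_succ, hgi]; simp only [stepH]; omega)

lemma up_of_succ (g : ℕ → Stp) (i : ℕ) (h : hgt g 0 (i + 1) = hgt g 0 i + 1) :
    g i = Stp.U := by
  cases hgi : g i
  · rfl
  · rw [hgt_succ, hgi] at h; simp only [stepH] at h; omega
  · rw [hgt_succ, hgi] at h; simp only [stepH] at h; omega

lemma hgt_succ_of_U (h : g i = Stp.U) : hgt g 0 (i + 1) = hgt g 0 i + 1 := by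
  rw [hgt_succ, h]; rfl

lemma hgt_succ_of_F {i : ℕ} (h : g i = Stp.F) : hgt g 0 (i + 1) = hgt g 0 i := by
  rw [hgt_succ, h]; rfl

lemma hgt_succ_of_D {i : ℕ} (h : g i = Stp.D) : hgt g 0 (i + 1) = hgt g 0 i - 1 := by
  rw [hgt_succ, h]; rfl

lemma exists_up (g : ℕ → Stp) (v : ℕ) :
    ∀ b a, a ≤ b → hgt g 0 a ≤ v → v + 1 ≤ hgt g 0 b →
      ∃ u, a ≤ u ∧ u < b ∧ g u = Stp.U ∧ hgt g 0 u = v ∧ hgt g 0 (u + 1) = v + 1 := by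
  intro b
  induction b with
  | zero =>
      intro a ha h1 h2
      have ha0 : a = 0 := by omega
      subst ha0
      omega
  | succ b ih =>
      intro a ha h1 h2
      by_cases hab : a = b + 1
      · subst hab; omega
      · have ha' : a ≤ b := by omega
        by_cases hb : v + 1 ≤ hgt g 0 b
        · obtain ⟨u, hu1, hu2, hu3, hu4, hu5⟩ := ih a ha' h1 hb
          exact ⟨u, hu1, by omega, hu3, hu4, hu5⟩
        · have hle := hgt_succ_le g b
          have hup : hgt g 0 (b + 1) = hgt g 0 b + 1 := by omega
          exact ⟨b, ha', by omega, up_of_succ g b hup, by omega, by omega⟩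

def mtch (g : ℕ → Stp) (i : ℕ) : ℕ :=
  Nat.findGreatest (fun j => g j = Stp.U ∧ hgt g 0 j = hgt g 0 (i + 1)) (i - 1)

lemma mtch_def (g : ℕ → Stp) (i : ℕ) :
    Nat.findGreatest (fun j => g j = Stp.U ∧ hgt g 0 j = hgt g 0 (i + 1)) (i - 1) = mtch g i :=
  rfl

variable {m : ℕ}

lemma mtch_spec (hval : valid g 0 m) {i : ℕ} (hi : i < m) (hD : g i = Stp.D) :
    mtch g i < i ∧ g (mtch g i) = Stp.U ∧ hgt g 0 (mtch g i) = hgt g 0 (i + 1) := by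
  have h1 : 1 ≤ hgt g 0 i := hval.1 i hi hD
  have hi1 : 1 ≤ i := by
    by_contra h
    have hi0 : i = 0 := by omega
    subst hi0
    rw [hgt_zero] at h1
    omega
  have hstep : hgt g 0 (i + 1) = hgt g 0 i - 1 := hgt_succ_of_D hD
  obtain ⟨u, hu1, hu2, hu3, hu4, hu5⟩ :=
    exists_up g (hgt g 0 (i + 1)) i 0 (by omega) (by rw [hgt_zero]; omega) (by omega)
  have hule : u ≤ i - 1 := by omega
  have hspec := Nat.findGreatest_spec
    (P := fun j => g j = Stp.U ∧ hgt g 0 j = hgt g 0 (i + 1)) hule ⟨hu3, hu4⟩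
  rw [mtch_def] at hspec
  have hle := Nat.findGreatest_le
    (P := fun j => g j = Stp.U ∧ hgt g 0 j = hgt g 0 (i + 1)) (i - 1)
  rw [mtch_def] at hle
  exact ⟨by omega, hspec.1, hspec.2⟩

lemma mtch_interior (hval : valid g 0 m) {i : ℕ} (hi : i < m) (hD : g i = Stp.D) :
    ∀ t, mtch g i < t → t ≤ i → hgt g 0 (mtch g i) + 1 ≤ hgt g 0 t := by
  intro t ht1 ht2
  by_contra hcon
  push_neg at hcon
  obtain ⟨hm1, hm2, hm3⟩ := mtch_spec hval hi hD
  have h1 : 1 ≤ hgt g 0 i := hval.1 i hi hD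
  have hstep : hgt g 0 (i + 1) = hgt g 0 i - 1 := hgt_succ_of_D hD
  obtain ⟨u, hu1, hu2, hu3, hu4, hu5⟩ :=
    exists_up g (hgt g 0 (mtch g i)) i t ht2 (by omega) (by omega)
  have hng := Nat.findGreatest_is_greatest
    (P := fun j => g j = Stp.U ∧ hgt g 0 j = hgt g 0 (i + 1)) (n := i - 1) (k := u)
    (by rw [mtch_def]; omega) (by omega)
  exact hng ⟨hu3, by omega⟩

lemma mtch_inj (hval : valid g 0 m) {i i' : ℕ} (hi : i < m) (hD : g i = Stp.D)
    (hi' : i' < m) (hD' : g i' = Stp.D) (hii : i < i') : mtch g i ≠ mtch g i' := by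
  intro he
  obtain ⟨h1, h2, h3⟩ := mtch_spec hval hi hD
  obtain ⟨h1', h2', h3'⟩ := mtch_spec hval hi' hD'
  have h4 := mtch_interior hval hi' hD' (i + 1) (by omega) (by omega)
  rw [← he] at h4
  omega

lemma mtch_surj (hval : valid g 0 m) {j : ℕ} (hj : j < m) (hU : g j = Stp.U) :
    ∃ i, j < i ∧ i < m ∧ g i = Stp.D ∧ mtch g i = j := by
  set v := hgt g 0 j with hv
  have hup : hgt g 0 (j + 1) = v + 1 := hgt_succ_of_U hU
  have hex : ∃ t, j + 1 ≤ t ∧ hgt g 0 t ≤ v := ⟨m, by omega, by rw [hval.2]; omega⟩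
  obtain ⟨i0, ⟨hQ1, hQ2⟩, hmin, hi0m⟩ :
      ∃ i0, (j + 1 ≤ i0 ∧ hgt g 0 i0 ≤ v) ∧ (∀ s < i0, ¬ (j + 1 ≤ s ∧ hgt g 0 s ≤ v)) ∧ i0 ≤ m :=
    ⟨Nat.find hex, Nat.find_spec hex, fun s hs => Nat.find_min hex hs,
      Nat.find_le ⟨by omega, by rw [hval.2]; omega⟩⟩
  have hne : i0 ≠ j + 1 := by
    intro h
    rw [h] at hQ2
    omega
  have hij : j + 2 ≤ i0 := by omega
  set i := i0 - 1 with hi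
  have hip1 : i + 1 = i0 := by omega
  have hnQ : ¬ (j + 1 ≤ i ∧ hgt g 0 i ≤ v) := hmin i (by omega)
  have hgi : v + 1 ≤ hgt g 0 i := by
    by_contra h
    exact hnQ ⟨by omega, by omega⟩
  have hgi1 : hgt g 0 (i + 1) ≤ v := by rw [hip1]; exact hQ2
  have hpred := hgt_pred_le g i
  have hgD : g i = Stp.D := by
    cases hgi' : g i
    · have := hgt_succ_of_U hgi'; omega
    · have := hgt_succ_of_F hgi'; omega
    · rfl
  refine ⟨i, by omega, by omega, hgD, ?_⟩
  have hPj : g j = Stp.U ∧ hgt g 0 j = hgt g 0 (i + 1) := ⟨hU, by omega⟩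
  have hjle : j ≤ i - 1 := by omega
  apply le_antisymm
  · by_contra hcon
    push_neg at hcon
    have hle := Nat.findGreatest_le
      (P := fun k => g k = Stp.U ∧ hgt g 0 k = hgt g 0 (i + 1)) (i - 1)
    rw [mtch_def] at hle
    have hspec := Nat.findGreatest_spec
      (P := fun k => g k = Stp.U ∧ hgt g 0 k = hgt g 0 (i + 1)) hjle hPj
    rw [mtch_def] at hspec
    have hmin' := hmin (mtch g i) (by omega)
    have hh : hgt g 0 (mtch g i) = v := by
      have := hspec.2
      omega
    have hjm : j + 1 ≤ mtch g i := by omega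
    exact hmin' ⟨hjm, by omega⟩
  · have := Nat.le_findGreatest
      (P := fun k => g k = Stp.U ∧ hgt g 0 k = hgt g 0 (i + 1)) hjle hPj
    rw [mtch_def] at this
    exact this

end Paths

/-! ### From paths to partitions -/

section Psi

variable {m : ℕ}

def mtchF (f : Fin m → Stp) (i : Fin m) : Fin m :=
  if h : mtch (ext f) (i : ℕ) < m then ⟨mtch (ext f) (i : ℕ), h⟩ else i

def pparts (f : Fin m → Stp) : Finset (Finset (Fin m)) :=
  ((Finset.univ.filter (fun i : Fin m => f i = Stp.F)).image fun i => ({i} : Finset (Fin m))) ∪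
  ((Finset.univ.filter (fun i : Fin m => f i = Stp.D)).image
    fun i => ({mtchF f i, i} : Finset (Fin m)))

variable {f : Fin m → Stp}

lemma ext_eq_D {i : Fin m} (hD : f i = Stp.D) : ext f (i : ℕ) = Stp.D := by
  rw [ext_val]; exact hD

lemma mtchF_spec (hv : valid (ext f) 0 m) {i : Fin m} (hD : f i = Stp.D) :
    ((mtchF f i : Fin m) : ℕ) = mtch (ext f) (i : ℕ) ∧ f (mtchF f i) = Stp.U ∧
      mtchF f i < i ∧
      hgt (ext f) 0 ((mtchF f i : Fin m) : ℕ) = hgt (ext f) 0 ((i : ℕ) + 1) := by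
  obtain ⟨h1, h2, h3⟩ := mtch_spec hv i.isLt (ext_eq_D hD)
  have hlt : mtch (ext f) (i : ℕ) < m := lt_trans h1 i.isLt
  have hF : mtchF f i = ⟨mtch (ext f) (i : ℕ), hlt⟩ := by rw [mtchF, dif_pos hlt]
  have hval : ((mtchF f i : Fin m) : ℕ) = mtch (ext f) (i : ℕ) := by rw [hF]
  refine ⟨hval, ?_, ?_, ?_⟩
  · rw [← ext_val f (mtchF f i), hval]; exact h2
  · exact Fin.lt_def.mpr (by omega)
  · rw [hval]; exact h3

lemma pparts_cases {W : Finset (Fin m)} (hW : W ∈ pparts f) :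
    (∃ i : Fin m, f i = Stp.F ∧ W = {i}) ∨
    (∃ i : Fin m, f i = Stp.D ∧ W = {mtchF f i, i}) := by
  rw [pparts, Finset.mem_union] at hW
  rcases hW with h | h
  · obtain ⟨i, hi, rfl⟩ := Finset.mem_image.mp h
    exact Or.inl ⟨i, (Finset.mem_filter.mp hi).2, rfl⟩
  · obtain ⟨i, hi, rfl⟩ := Finset.mem_image.mp h
    exact Or.inr ⟨i, (Finset.mem_filter.mp hi).2, rfl⟩

lemma singleton_mem_pparts {i : Fin m} (hF : f i = Stp.F) : ({i} : Finset (Fin m)) ∈ pparts f :=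
  Finset.mem_union_left _ (Finset.mem_image.mpr
    ⟨i, Finset.mem_filter.mpr ⟨Finset.mem_univ i, hF⟩, rfl⟩)

lemma pair_mem_pparts {i : Fin m} (hD : f i = Stp.D) :
    ({mtchF f i, i} : Finset (Fin m)) ∈ pparts f :=
  Finset.mem_union_right _ (Finset.mem_image.mpr
    ⟨i, Finset.mem_filter.mpr ⟨Finset.mem_univ i, hD⟩, rfl⟩)

lemma pparts_unique (hv : valid (ext f) 0 m) {W1 W2 : Finset (Fin m)}
    (h1 : W1 ∈ pparts f) (h2 : W2 ∈ pparts f) {x : Fin m}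
    (hx1 : x ∈ W1) (hx2 : x ∈ W2) : W1 = W2 := by
  have key : ∀ W ∈ pparts f, x ∈ W →
      (f x = Stp.F ∧ W = {x}) ∨ (f x = Stp.D ∧ W = {mtchF f x, x}) ∨
      (f x = Stp.U ∧ ∃ i : Fin m, f i = Stp.D ∧ mtchF f i = x ∧ W = {x, i}) := by
    intro W hW hxW
    rcases pparts_cases hW with ⟨i, hF, rfl⟩ | ⟨i, hD, rfl⟩
    · have hxi : x = i := Finset.mem_singleton.mp hxW
      subst hxi
      exact Or.inl ⟨hF, rfl⟩
    · obtain ⟨hvv, hfU, hlt, -⟩ := mtchF_spec hv hD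
      rcases mem_pair.mp hxW with rfl | rfl
      · exact Or.inr (Or.inr ⟨hfU, i, hD, rfl, rfl⟩)
      · exact Or.inr (Or.inl ⟨hD, rfl⟩)
  rcases key W1 h1 hx1 with ⟨hf1, rfl⟩ | ⟨hf1, rfl⟩ | ⟨hf1, i1, hD1, hm1, rfl⟩ <;>
    rcases key W2 h2 hx2 with ⟨hf2, rfl⟩ | ⟨hf2, rfl⟩ | ⟨hf2, i2, hD2, hm2, rfl⟩
  · rfl
  · rw [hf1] at hf2; exact absurd hf2 (by decide)
  · rw [hf1] at hf2; exact absurd hf2 (by decide)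
  · rw [hf1] at hf2; exact absurd hf2 (by decide)
  · rfl
  · rw [hf1] at hf2; exact absurd hf2 (by decide)
  · rw [hf1] at hf2; exact absurd hf2 (by decide)
  · rw [hf1] at hf2; exact absurd hf2 (by decide)
  · -- both pairs with x as the opener
    have e1 : ((mtchF f i1 : Fin m) : ℕ) = mtch (ext f) (i1 : ℕ) := (mtchF_spec hv hD1).1
    have e2 : ((mtchF f i2 : Fin m) : ℕ) = mtch (ext f) (i2 : ℕ) := (mtchF_spec hv hD2).1
    have hmm : mtch (ext f) (i1 : ℕ) = mtch (ext f) (i2 : ℕ) := by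
      rw [← e1, ← e2, hm1, hm2]
    have hii : i1 = i2 := by
      by_contra hne
      have hne' : (i1 : ℕ) ≠ (i2 : ℕ) := fun h => hne (Fin.ext h)
      rcases Nat.lt_or_ge (i1 : ℕ) (i2 : ℕ) with h | h
      · exact mtch_inj hv i1.isLt (ext_eq_D hD1) i2.isLt (ext_eq_D hD2) h hmm
      · exact mtch_inj hv i2.isLt (ext_eq_D hD2) i1.isLt (ext_eq_D hD1) (by omega) hmm.symm
    rw [hii]

lemma pparts_supIndep (hv : valid (ext f) 0 m) : (pparts f).SupIndep id := by
  rw [Finset.supIndep_iff_pairwiseDisjoint]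
  intro W1 hW1 W2 hW2 hne
  simp only [Function.onFun, id]
  rw [Finset.disjoint_left]
  intro x hx1 hx2
  exact hne (pparts_unique hv hW1 hW2 hx1 hx2)

lemma pparts_sup (hv : valid (ext f) 0 m) : (pparts f).sup id = Finset.univ := by
  apply le_antisymm (Finset.sup_le fun W _ => Finset.subset_univ W)
  intro x _
  have : ∃ W ∈ pparts f, x ∈ W := by
    cases hfx : f x
    · -- opener
      have hU' : ext f (x : ℕ) = Stp.U := by rw [ext_val]; exact hfx
      obtain ⟨i, hji, him, hDi, hmi⟩ := mtch_surj hv x.isLt hU'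
      have hDiF : f (⟨i, him⟩ : Fin m) = Stp.D := by
        rw [← ext_val f ⟨i, him⟩]; exact hDi
      have hmF : mtchF f (⟨i, him⟩ : Fin m) = x := by
        apply Fin.ext
        rw [(mtchF_spec hv hDiF).1]
        exact hmi
      refine ⟨{mtchF f ⟨i, him⟩, ⟨i, him⟩}, pair_mem_pparts hDiF, ?_⟩
      rw [hmF]
      simp
    · exact ⟨{x}, singleton_mem_pparts hfx, Finset.mem_singleton_self x⟩
    · exact ⟨{mtchF f x, x}, pair_mem_pparts hfx, by simp⟩
  obtain ⟨W, hW, hxW⟩ := this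
  exact Finset.mem_of_subset (Finset.le_sup (f := id) hW) hxW

lemma pparts_ne_bot : ⊥ ∉ pparts f := by
  intro h
  rcases pparts_cases h with ⟨i, -, hW⟩ | ⟨i, -, hW⟩
  · exact Finset.singleton_ne_empty i (by rw [← hW]; rfl)
  · exact Finset.insert_ne_empty _ _ (by rw [← hW]; rfl)

def psi (f : Fin m → Stp) : Finpartition (Finset.univ : Finset (Fin m)) :=
  if hv : valid (ext f) 0 m then
    ⟨pparts f, pparts_supIndep hv, pparts_sup hv, pparts_ne_bot⟩
  else ⊥

lemma psi_parts (hv : valid (ext f) 0 m) : (psi f).parts = pparts f := by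
  rw [psi, dif_pos hv]

lemma psi_card (hv : valid (ext f) 0 m) : ∀ V ∈ (psi f).parts, V.card ≤ 2 := by
  intro V hV
  rw [psi_parts hv] at hV
  rcases pparts_cases hV with ⟨i, -, rfl⟩ | ⟨i, -, rfl⟩
  · simp
  · exact le_trans (Finset.card_insert_le _ _) (by simp)

lemma psi_noncrossing (hv : valid (ext f) 0 m) : IsNoncrossing (psi f) := by
  intro V1 hV1 V2 hV2 x1 x2 x3 x4 h12 h23 h34 hx1 hx3 hx2 hx4
  rw [psi_parts hv] at hV1 hV2
  have h13 : x1 < x3 := lt_trans h12 h23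
  have h24 : x2 < x4 := lt_trans h23 h34
  exfalso
  rcases pparts_cases hV1 with ⟨i, -, rfl⟩ | ⟨i1, hD1, rfl⟩
  · have e1 := Finset.mem_singleton.mp hx1
    have e3 := Finset.mem_singleton.mp hx3
    exact absurd (e1.trans e3.symm) (ne_of_lt h13)
  rcases pparts_cases hV2 with ⟨i, -, rfl⟩ | ⟨i2, hD2, rfl⟩
  · have e2 := Finset.mem_singleton.mp hx2
    have e4 := Finset.mem_singleton.mp hx4
    exact absurd (e2.trans e4.symm) (ne_of_lt h24)
  obtain ⟨e1v, -, hlt1, hh1⟩ := mtchF_spec hv hD1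
  obtain ⟨e2v, -, hlt2, hh2⟩ := mtchF_spec hv hD2
  have hx13 : x1 = mtchF f i1 ∧ x3 = i1 := by
    rcases mem_pair.mp hx1 with h1 | h1 <;> rcases mem_pair.mp hx3 with h3 | h3
    · exact absurd (h1.trans h3.symm) (ne_of_lt h13)
    · exact ⟨h1, h3⟩
    · exfalso
      rw [h1, h3] at h13
      exact absurd (lt_trans h13 hlt1) (lt_irrefl _)
    · exact absurd (h1.trans h3.symm) (ne_of_lt h13)
  have hx24 : x2 = mtchF f i2 ∧ x4 = i2 := by
    rcases mem_pair.mp hx2 with h1 | h1 <;> rcases mem_pair.mp hx4 with h3 | h3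
    · exact absurd (h1.trans h3.symm) (ne_of_lt h24)
    · exact ⟨h1, h3⟩
    · exfalso
      rw [h1, h3] at h24
      exact absurd (lt_trans h24 hlt2) (lt_irrefl _)
    · exact absurd (h1.trans h3.symm) (ne_of_lt h24)
  obtain ⟨hx1e, hx3e⟩ := hx13
  obtain ⟨hx2e, hx4e⟩ := hx24
  -- heights
  have hm1v : mtch (ext f) (i1 : ℕ) = (x1 : ℕ) := by rw [← e1v, hx1e]
  have hm2v : mtch (ext f) (i2 : ℕ) = (x2 : ℕ) := by rw [← e2v, hx2e]
  have h12' : (x1 : ℕ) < (x2 : ℕ) := h12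
  have h23' : (x2 : ℕ) < (x3 : ℕ) := h23
  have h34' : (x3 : ℕ) < (x4 : ℕ) := h34
  have hint1 := mtch_interior hv i1.isLt (ext_eq_D hD1) (x2 : ℕ)
    (by rw [hm1v]; omega) (by rw [← hx3e] at *; omega)
  have hint2 := mtch_interior hv i2.isLt (ext_eq_D hD2) ((x3 : ℕ) + 1)
    (by rw [hm2v]; omega) (by rw [← hx4e] at *; omega)
  rw [hm1v] at hint1
  rw [hm2v] at hint2
  -- hh1 : hgt (mtchF f i1) = hgt (i1 + 1), i.e. hgt x1 = hgt (x3 + 1)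
  have hc : hgt (ext f) 0 ((x3 : ℕ) + 1) = hgt (ext f) 0 (x1 : ℕ) := by
    rw [hx1e, hx3e]
    exact hh1.symm
  omega

end Psi

/-! ### The two maps are inverse -/

section Inverse

variable {m : ℕ}

lemma parts_subset_eq {α : Type*} [DecidableEq α] {s : Finset α}
    {P Q : Finpartition s} (h : P.parts ⊆ Q.parts) : P = Q := by
  have h2 : Q.parts ⊆ P.parts := by
    intro W hW
    obtain ⟨x, hx⟩ := Q.nonempty_of_mem_parts hW
    have hxs : x ∈ s := Q.le hW hx
    have hPmem : P.part x ∈ Q.parts := h (P.part_mem.2 hxs)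
    have heq := Q.eq_of_mem_parts hPmem hW (P.mem_part hxs) hx
    rw [← heq]
    exact P.part_mem.2 hxs
  ext W
  exact ⟨fun hw => h hw, fun hw => h2 hw⟩

lemma phi_psi {f : Fin m → Stp} (hv : valid (ext f) 0 m) : phi (psi f) = f := by
  funext x
  cases hfx : f x
  · -- opener
    have hU' : ext f (x : ℕ) = Stp.U := by rw [ext_val]; exact hfx
    obtain ⟨i, hji, him, hDi, hmi⟩ := mtch_surj hv x.isLt hU'
    set iF : Fin m := ⟨i, him⟩ with hiF
    have hDiF : f iF = Stp.D := by rw [← ext_val f iF]; exact hDi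
    have hmF : mtchF f iF = x := by
      apply Fin.ext
      rw [(mtchF_spec hv hDiF).1]
      exact hmi
    have hxiF : x < iF := by
      apply Fin.lt_def.mpr
      show (x : ℕ) < i
      omega
    have hW : ({x, iF} : Finset (Fin m)) ∈ (psi f).parts := by
      rw [psi_parts hv, ← hmF]
      exact pair_mem_pparts hDiF
    have hpart : (psi f).part x = {x, iF} :=
      (psi f).part_eq_of_mem hW (by simp)
    rw [phi, hpart, if_neg (by rw [Finset.card_pair (ne_of_lt hxiF)]; omega), if_pos]
    intro y hy
    rcases mem_pair.mp hy with rfl | rfl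
    · exact le_rfl
    · exact hxiF.le
  · -- singleton
    have hW : ({x} : Finset (Fin m)) ∈ (psi f).parts := by
      rw [psi_parts hv]; exact singleton_mem_pparts hfx
    have hpart : (psi f).part x = {x} :=
      (psi f).part_eq_of_mem hW (Finset.mem_singleton_self x)
    rw [phi, hpart, if_pos (Finset.card_singleton x)]
  · -- closer
    obtain ⟨-, -, hlt, -⟩ := mtchF_spec hv hfx
    have hW : ({mtchF f x, x} : Finset (Fin m)) ∈ (psi f).parts := by
      rw [psi_parts hv]; exact pair_mem_pparts hfx
    have hpart : (psi f).part x = {mtchF f x, x} :=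
      (psi f).part_eq_of_mem hW (by simp)
    rw [phi, hpart, if_neg (by rw [Finset.card_pair (ne_of_lt hlt)]; omega), if_neg]
    intro hall
    exact absurd (hall (mtchF f x) (by simp)) (not_le.mpr hlt)

variable {σ : Finpartition (Finset.univ : Finset (Fin m))}

lemma opn_closer (hnc : IsNoncrossing σ) {a b : Fin m} (hab : a < b)
    (hV : ({a, b} : Finset (Fin m)) ∈ σ.parts) :
    opn σ ((b : ℕ) + 1) = opn σ (a : ℕ) := by
  have hab' : (a : ℕ) < (b : ℕ) := hab
  unfold opn
  apply Finset.filter_congr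
  intro U hU
  constructor
  · rintro ⟨h2, ⟨x, hxU, hx⟩, ⟨y, hyU, hy⟩⟩
    have hUV : U ≠ {a, b} := by
      rintro rfl
      rcases mem_pair.mp hyU with rfl | rfl
      · omega
      · omega
    refine ⟨h2, ?_, ⟨y, hyU, by omega⟩⟩
    by_contra hcon
    push_neg at hcon
    have hxa : (a : ℕ) ≤ (x : ℕ) := hcon x hxU
    have hxne_a : x ≠ a := by
      intro h
      exact hUV (σ.eq_of_mem_parts hU hV hxU (by rw [h]; simp))
    have hxne_b : x ≠ b := by
      intro h
      exact hUV (σ.eq_of_mem_parts hU hV hxU (by rw [h]; simp))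
    have h1 : a < x := Fin.lt_def.mpr (by
      have : (x : ℕ) ≠ (a : ℕ) := fun h => hxne_a (Fin.ext h)
      omega)
    have h2' : x < b := Fin.lt_def.mpr (by
      have : (x : ℕ) ≠ (b : ℕ) := fun h => hxne_b (Fin.ext h)
      omega)
    have h3 : b < y := Fin.lt_def.mpr (by omega)
    exact hUV (hnc ({a, b} : Finset (Fin m)) hV U hU a x b y h1 h2' h3
      (by simp) (by simp) hxU hyU).symm
  · rintro ⟨h2, ⟨x, hxU, hx⟩, ⟨y, hyU, hy⟩⟩
    have hUV : U ≠ {a, b} := by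
      rintro rfl
      rcases mem_pair.mp hxU with rfl | rfl
      · omega
      · omega
    refine ⟨h2, ⟨x, hxU, by omega⟩, ?_⟩
    by_contra hcon
    push_neg at hcon
    have hyb : (y : ℕ) ≤ (b : ℕ) := by
      have := hcon y hyU
      omega
    have hyne_a : y ≠ a := by
      intro h
      exact hUV (σ.eq_of_mem_parts hU hV hyU (by rw [h]; simp))
    have hyne_b : y ≠ b := by
      intro h
      exact hUV (σ.eq_of_mem_parts hU hV hyU (by rw [h]; simp))
    have h1 : x < a := Fin.lt_def.mpr (by omega)
    have h2' : a < y := Fin.lt_def.mpr (by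
      have : (y : ℕ) ≠ (a : ℕ) := fun h => hyne_a (Fin.ext h)
      omega)
    have h3 : y < b := Fin.lt_def.mpr (by
      have : (y : ℕ) ≠ (b : ℕ) := fun h => hyne_b (Fin.ext h)
      omega)
    exact hUV (hnc U hU ({a, b} : Finset (Fin m)) hV x a y b h1 h2' h3
      hxU hyU (by simp) (by simp))

lemma psi_phi (hnc : IsNoncrossing σ) (hc2 : ∀ V ∈ σ.parts, V.card ≤ 2) :
    psi (phi σ) = σ := by
  have hv := valid_phi hnc hc2
  refine (parts_subset_eq ?_).symm
  intro V hV
  rw [psi_parts hv]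
  rcases card_cases hc2 hV with h1 | h2
  · obtain ⟨v, rfl⟩ := Finset.card_eq_one.mp h1
    have hpart : σ.part v = {v} := σ.part_eq_of_mem hV (Finset.mem_singleton_self v)
    have hphiv : phi σ v = Stp.F := by
      rw [phi, if_pos (by rw [hpart]; exact Finset.card_singleton v)]
    exact singleton_mem_pparts hphiv
  · obtain ⟨a, b, hab, rfl⟩ := pair_repr h2
    have hab' : (a : ℕ) < (b : ℕ) := hab
    have hparta : σ.part a = {a, b} := σ.part_eq_of_mem hV (by simp)
    have hpartb : σ.part b = {a, b} := σ.part_eq_of_mem hV (by simp)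
    have hphia : phi σ a = Stp.U := by
      rw [phi, if_neg (by rw [hparta]; omega), if_pos]
      intro x hx
      rw [hparta] at hx
      rcases mem_pair.mp hx with rfl | rfl
      · exact le_rfl
      · exact hab.le
    have hphib : phi σ b = Stp.D := by
      rw [phi, if_neg (by rw [hpartb]; omega), if_neg]
      intro hall
      exact absurd (hall a (by rw [hpartb]; simp)) (not_le.mpr hab)
    have hkey : mtchF (phi σ) b = a := by
      have hm : mtch (ext (phi σ)) (b : ℕ) = (a : ℕ) := by
        rw [← mtch_def]
        apply Nat.findGreatest_eq_iff.mpr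
        refine ⟨by omega, fun _ => ⟨?_, ?_⟩, ?_⟩
        · rw [ext_val]; exact hphia
        · rw [hgt_phi hnc hc2 (a : ℕ) (le_of_lt a.isLt),
            hgt_phi hnc hc2 ((b : ℕ) + 1) (by have := b.isLt; omega),
            opn_closer hnc hab hV]
        · intro k hk hk2
          rintro ⟨hkU, hkh⟩
          have hkm : k < m := by have := b.isLt; omega
          have hVne : ({a, b} : Finset (Fin m)).Nonempty := ⟨a, by simp⟩
          have hmin : ((({a, b} : Finset (Fin m)).min' hVne : Fin m) : ℕ) = (a : ℕ) := by
            rw [min'_pair hab]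
          have hsub : insert ({a, b} : Finset (Fin m)) (opn σ (a : ℕ)) ⊆ opn σ k := by
            intro U hU'
            rcases Finset.mem_insert.mp hU' with rfl | hU'
            · simp only [opn, Finset.mem_filter]
              exact ⟨hV, h2, ⟨a, by simp, by omega⟩, ⟨b, by simp, by omega⟩⟩
            · have hU'' := hU'
              rw [← hmin, ← depth_filter_eq hnc hc2 hV hVne] at hU''
              obtain ⟨hUmem, -, r, hr, sx, hs, hall⟩ := Finset.mem_filter.mp hU''
              have hbs : b ≤ sx := (hall b (by simp)).2
              have hbs' : (b : ℕ) ≤ (sx : ℕ) := hbs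
              simp only [opn, Finset.mem_filter] at hU'
              obtain ⟨-, hU2, ⟨x, hxU, hxlt⟩, -⟩ := hU'
              exact Finset.mem_filter.mpr
                ⟨hUmem, hU2, ⟨x, hxU, by omega⟩, ⟨sx, hs, by omega⟩⟩
          have hnotmem : ({a, b} : Finset (Fin m)) ∉ opn σ (a : ℕ) := by
            simp only [opn, Finset.mem_filter]
            rintro ⟨-, -, ⟨x, hx, hxlt⟩, -⟩
            rcases mem_pair.mp hx with rfl | rfl
            · omega
            · omega
          have hcard : (opn σ (a : ℕ)).card + 1 ≤ (opn σ k).card := by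
            rw [← Finset.card_insert_of_notMem hnotmem]
            exact Finset.card_le_card hsub
          rw [hgt_phi hnc hc2 k (by omega),
            hgt_phi hnc hc2 ((b : ℕ) + 1) (by have := b.isLt; omega),
            opn_closer hnc hab hV] at hkh
          omega
      rw [mtchF, dif_pos (by rw [hm]; exact a.isLt)]
      apply Fin.ext
      show mtch (ext (phi σ)) (b : ℕ) = (a : ℕ)
      exact hm
    have := pair_mem_pparts (f := phi σ) hphib
    rw [hkey] at this
    exact this

end Inverse


lemma comb (β γ : ℕ → ℝ) (m : ℕ) :
    (∑ σ ∈ NC12 m,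
      (∏ V ∈ σ.parts.filter (fun V => V.card = 1), β (depth σ V)) *
      (∏ V ∈ σ.parts.filter (fun V => V.card = 2), γ (depth σ V)))
    = PSum β γ m 0 := by
  have hps : PSum β γ m 0
      = ∑ f ∈ (Finset.univ : Finset (Fin m → Stp)).filter (fun f => valid (ext f) 0 m),
          wgt β γ (ext f) 0 m := (Finset.sum_filter _ _).symm
  rw [hps]
  refine Finset.sum_nbij' (i := fun σ => phi σ) (j := fun f => psi f) ?_ ?_ ?_ ?_ ?_
  · intro σ hσ
    have h := (Finset.mem_filter.mp hσ).2
    exact Finset.mem_filter.mpr ⟨Finset.mem_univ _, valid_phi h.1 h.2⟩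
  · intro f hf
    have hv := (Finset.mem_filter.mp hf).2
    exact Finset.mem_filter.mpr ⟨Finset.mem_univ _, psi_noncrossing hv, psi_card hv⟩
  · intro σ hσ
    have h := (Finset.mem_filter.mp hσ).2
    exact psi_phi h.1 h.2
  · intro f hf
    exact phi_psi (Finset.mem_filter.mp hf).2
  · intro σ hσ
    have h := (Finset.mem_filter.mp hσ).2
    exact (wgt_phi h.1 h.2 β γ).symm

end AB

/-- Accardi–Bożejko formula: moments are sums over noncrossing pair-singleton
partitions of products of Jacobi parameters indexed by depths. -/
theorem stmt_0 (μ : Measure ℝ) [IsProbabilityMeasure μ] (hfin : FiniteMoments μ)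
    (β γ : ℕ → ℝ) (hJ : HasJacobi μ β γ) (m : ℕ) :
    mom μ m = ∑ σ ∈ NC12 m,
      (∏ V ∈ σ.parts.filter (fun V => V.card = 1), β (depth σ V)) *
      (∏ V ∈ σ.parts.filter (fun V => V.card = 2), γ (depth σ V)) := by
  rw [AB.mom_eq_c μ hfin β γ hJ m, AB.c_eq_PSum]
  exact (AB.comb β γ m).symm
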